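/- Let A be a finite alphabet and m ≥ 1. Suppose w is a finite word over A such that w contains no m-th power. Then for any non-empty word v and any occurrence pattern, w cannot contain v^m as a factor; in particular if a word β over A ⊔ B (a larger alphabet) has the property that deleting all letters from B yields w, and β contains a factor γ^{m+2} where γ contains at least one letter of A, then w contains an m-th power — a contradiction. Hence every factor of β of the form γ^{m+2} consists only of letters from B. -/

import Mathlib

lemma joinRepFilterMap {α β : Type*} (f : α → Option β) (n : ℕ) (γ : List α) :
    ((List.replicate n γ).flatten).filterMap f = (List.replicate n (γ.filterMap f)).flatten := by
  induction n with
  | zero => simp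
  | succ k ih => simp [List.replicate_succ, List.filterMap_append, ih]

/-- If the red projection of β contains no m-th power, then any factor of β of the form
γ^{m+2} consists only of yellow letters. -/
theorem stmt15 (A B : Type*) [Fintype A] [Fintype B] (m : ℕ) (hm : 1 ≤ m)
    (β : List (A ⊕ B))
    (hred : ∀ v : List A, v ≠ [] →
      ¬ (List.replicate m v).flatten <:+: β.filterMap (Sum.elim some fun _ => none))
    (γ : List (A ⊕ B)) (hγ : (List.replicate (m + 2) γ).flatten <:+: β) :
    ∀ e ∈ γ, ∃ b : B, e = Sum.inr b := by
  intro e he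
  rcases e with a | b
  · exfalso
    set f : A ⊕ B → Option A := Sum.elim some fun _ => none with hf
    set v := γ.filterMap f with hv
    have hvne : v ≠ [] := by
      have : a ∈ v := List.mem_filterMap.2 ⟨Sum.inl a, he, rfl⟩
      exact List.ne_nil_of_mem this
    apply hred v hvne
    -- infix passes through filterMap
    obtain ⟨s, t, hst⟩ := hγ
    have h1 : ((List.replicate (m + 2) γ).flatten).filterMap f <:+: β.filterMap f := by
      refine ⟨s.filterMap f, t.filterMap f, ?_⟩
      rw [← hst]; simp [List.filterMap_append]
    rw [joinRepFilterMap] at h1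
    refine List.IsInfix.trans ?_ h1
    have : (m + 2) = m + 2 := rfl
    refine (List.IsPrefix.isInfix ?_)
    rw [List.replicate_add]
    exact ⟨(List.replicate 2 v).flatten, List.flatten_append.symm⟩
  · exact ⟨b, rfl⟩
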